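/- Let (A, B) be a nonempty bounded convex proximal parallel pair in a Banach space X, with B = A + h, having the rectangle property and property UC, and let T: A ∪ B → A ∪ B be an asymptotically relatively nonexpansive map (with associated sequence {k_n}) satisfying T(A) ⊆ B and T(B) ⊆ A. For x ∈ A define r_x(b) = limsup_m ‖u_m(x) − b‖ for b ∈ B. Then for every a ∈ A and every n ∈ ℕ, r_x(u_n(a + h)) ≤ k_n · r_x(a + h). -/

import Mathlib

open Filter Topology

/-- dist(A,B) = inf { ‖a - b‖ : a ∈ A, b ∈ B }. -/
noncomputable def setDist {X : Type*} [NormedAddCommGroup X] (A B : Set X) : ℝ :=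
  sInf {d : ℝ | ∃ a ∈ A, ∃ b ∈ B, d = ‖a - b‖}

/-- (A,B) is a proximal pair. -/
def IsProximalPair {X : Type*} [NormedAddCommGroup X] (A B : Set X) : Prop :=
  ∀ x ∈ A, ∀ y ∈ B, ∃ x₁ ∈ A, ∃ y₁ ∈ B,
    ‖x - y₁‖ = setDist A B ∧ ‖y - x₁‖ = setDist A B

/-- (A,B) is a sharp proximal pair: the proximal pair (x₁,y₁) is unique. -/
def IsSharpProximalPair {X : Type*} [NormedAddCommGroup X] (A B : Set X) : Prop :=
  IsProximalPair A B ∧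
    ∀ x ∈ A, ∀ y ∈ B, ∀ x₁ ∈ A, ∀ y₁ ∈ B, ∀ x₂ ∈ A, ∀ y₂ ∈ B,
      ‖x - y₁‖ = setDist A B → ‖y - x₁‖ = setDist A B →
      ‖x - y₂‖ = setDist A B → ‖y - x₂‖ = setDist A B → x₁ = x₂ ∧ y₁ = y₂

/-- (A,B) is a proximal parallel pair: a sharp proximal pair with a unique
translation vector h such that B = A + h. -/
def IsProximalParallelPair {X : Type*} [NormedAddCommGroup X] (A B : Set X) : Prop :=
  IsSharpProximalPair A B ∧ ∃! h : X, B = (fun a => a + h) '' A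

/-- Property UC of the pair (A, B). -/
def PropertyUC {X : Type*} [NormedAddCommGroup X] (A B : Set X) : Prop :=
  ∀ x z y : ℕ → X, (∀ n, x n ∈ A) → (∀ n, z n ∈ A) → (∀ n, y n ∈ B) →
    Filter.Tendsto (fun n => ‖x n - y n‖) Filter.atTop (nhds (setDist A B)) →
    Filter.Tendsto (fun n => ‖z n - y n‖) Filter.atTop (nhds (setDist A B)) →
    Filter.Tendsto (fun n => ‖x n - z n‖) Filter.atTop (nhds 0)

/-- Rectangle property of a parallel pair (A, A + h). -/
def RectangleProperty {X : Type*} [NormedAddCommGroup X] (A : Set X) (h : X) : Prop :=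
  ∀ x ∈ A, ∀ y ∈ A, ‖x + h - y‖ = ‖y + h - x‖

/-- T is asymptotically relatively nonexpansive (with sequence k) on the pair (A,B). -/
def AsympRelNonexpansive {X : Type*} [NormedAddCommGroup X]
    (A B : Set X) (T : X → X) (k : ℕ → ℝ) : Prop :=
  (∀ n, 1 ≤ k n) ∧ Filter.Tendsto k Filter.atTop (nhds 1) ∧
    ∀ n : ℕ, ∀ x ∈ A, ∀ y ∈ B, ‖T^[n] x - T^[n] y‖ ≤ k n * ‖x - y‖

/-- u_n(x): given the proximal companion x' of x, it is Tⁿ(x') for odd n and Tⁿ(x) for even n. -/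
def uSeq {X : Type*} (T : X → X) (x x' : X) (n : ℕ) : X :=
  if Odd n then T^[n] x' else T^[n] x

/-- Weak convergence of a sequence. -/
def WeakConvSeq {X : Type*} [NormedAddCommGroup X] [NormedSpace ℝ X]
    (u : ℕ → X) (y : X) : Prop :=
  ∀ f : X →L[ℝ] ℝ, Filter.Tendsto (fun n => f (u n)) Filter.atTop (nhds (f y))

/-- ω_w(u): weak subsequential limit points of the sequence u. -/
def omegaW {X : Type*} [NormedAddCommGroup X] [NormedSpace ℝ X] (u : ℕ → X) : Set X :=
  {y | ∃ φ : ℕ → ℕ, StrictMono φ ∧ WeakConvSeq (fun i => u (φ i)) y}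

/-- ω(u): norm subsequential limit points of the sequence u. -/
def omegaS {X : Type*} [NormedAddCommGroup X] (u : ℕ → X) : Set X :=
  {y | ∃ φ : ℕ → ℕ, StrictMono φ ∧
    Filter.Tendsto (fun i => u (φ i)) Filter.atTop (nhds y)}

/-- Every subsequence of u admits a norm-convergent subsequence. -/
def NormSubseqCompact {X : Type*} [NormedAddCommGroup X] (u : ℕ → X) : Prop :=
  ∀ φ : ℕ → ℕ, StrictMono φ → ∃ ψ : ℕ → ℕ, StrictMono ψ ∧ ∃ y : X,
    Filter.Tendsto (fun i => u (φ (ψ i))) Filter.atTop (nhds y)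

/-- X has uniformly Kadec-Klee (UKK) norm. -/
def UKKNorm (X : Type*) [NormedAddCommGroup X] [NormedSpace ℝ X] : Prop :=
  ∀ ε : ℝ, 0 < ε → ∃ δ : ℝ, 0 < δ ∧ ∀ (u : ℕ → X) (y : X),
    (∀ n, ‖u n‖ ≤ 1) → WeakConvSeq u y →
    ε < sInf {d : ℝ | ∃ n m : ℕ, n ≠ m ∧ d = ‖u n - u m‖} → ‖y‖ ≤ 1 - δ

/-- X is nearly uniformly convex: reflexive (the canonical embedding into the
double dual is surjective) with UKK norm. -/
def NearlyUniformlyConvex (X : Type*) [NormedAddCommGroup X] [NormedSpace ℝ X] : Prop :=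
  Function.Surjective (NormedSpace.inclusionInDoubleDual ℝ X) ∧ UKKNorm X
/-- Proposition 3.2(3): r_x(u_n(a+h)) ≤ k_n · r_x(a+h) for every n and a ∈ A. -/
theorem asymptotic_radius_uSeq_bound
    {X : Type*} [NormedAddCommGroup X] [NormedSpace ℝ X] [CompleteSpace X]
    (A B : Set X) (h : X) (hAne : A.Nonempty) (hBne : B.Nonempty)
    (hAbd : Bornology.IsBounded A) (hBbd : Bornology.IsBounded B)
    (hAcv : Convex ℝ A) (hBcv : Convex ℝ B)
    (hpair : IsProximalParallelPair A B)
    (hBh : B = (fun a => a + h) '' A)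
    (hrect : RectangleProperty A h)
    (hUC : PropertyUC A B)
    (T : X → X) (hTA : Set.MapsTo T A B) (hTB : Set.MapsTo T B A)
    (k : ℕ → ℝ) (hT : AsympRelNonexpansive A B T k) :
    ∀ x ∈ A, ∀ a ∈ A, ∀ n : ℕ,
      Filter.limsup (fun m => ‖uSeq T x (x + h) m - uSeq T (a + h) a n‖) Filter.atTop ≤
        k n * Filter.limsup (fun m => ‖uSeq T x (x + h) m - (a + h)‖) Filter.atTop := by
  classical
  intro x hx a ha n
  obtain ⟨a₀, ha₀⟩ := hAne
  obtain ⟨CA, hCA⟩ := isBounded_iff_forall_norm_le.mp hAbd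
  obtain ⟨CB, hCB⟩ := isBounded_iff_forall_norm_le.mp hBbd
  have hCA0 : 0 ≤ CA := le_trans (norm_nonneg a₀) (hCA a₀ ha₀)
  set d := setDist A B with hd
  obtain ⟨hk1, hklim, hasym⟩ := hT
  have hprox : IsProximalPair A B := hpair.1.1
  -- membership helpers
  have hmemB : ∀ p ∈ A, p + h ∈ B := fun p hp => hBh ▸ ⟨p, hp, rfl⟩
  have hsubA : ∀ q ∈ B, q - h ∈ A := by
    intro q hq
    rw [hBh] at hq
    obtain ⟨c, hc, rfl⟩ := hq
    simpa using hc
  have hxB : x + h ∈ B := hmemB x hx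
  have hbB : a + h ∈ B := hmemB a ha
  -- distance lower bound
  have d_le : ∀ p ∈ A, ∀ q ∈ B, d ≤ ‖p - q‖ := by
    intro p hp q hq
    refine csInf_le ⟨0, ?_⟩ ⟨p, hp, q, hq, rfl⟩
    rintro r ⟨a', _, b', _, rfl⟩
    exact norm_nonneg _
  have d0 : 0 ≤ d :=
    le_csInf ⟨‖a₀ - (a₀ + h)‖, a₀, ha₀, a₀ + h, hmemB a₀ ha₀, rfl⟩
      (by rintro r ⟨a', _, b', _, rfl⟩; exact norm_nonneg _)
  -- ‖h‖ = d
  have hd_le : d ≤ ‖h‖ := by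
    have := d_le a₀ ha₀ (a₀ + h) (hmemB a₀ ha₀)
    simpa using this
  have hle_d : ‖h‖ ≤ d := by
    have hg : ∀ p : X, ∃ c : X, p ∈ A → c ∈ A ∧ ‖p - (c + h)‖ = d := by
      intro p
      by_cases hp : p ∈ A
      · obtain ⟨x₁, hx₁, y₁, hy₁, hpy, hyx⟩ := hprox p hp (a₀ + h) (hmemB a₀ ha₀)
        rw [hBh] at hy₁
        obtain ⟨c, hc, rfl⟩ := hy₁
        exact ⟨c, fun _ => ⟨hc, hpy⟩⟩
      · exact ⟨0, fun hp' => absurd hp' hp⟩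
    choose gf hgf using hg
    set s : ℕ → X := fun i => gf^[i] a₀ with hs
    have hssucc : ∀ i, s (i + 1) = gf (s i) := fun i => Function.iterate_succ_apply' gf i a₀
    have hsA : ∀ i, s i ∈ A := by
      intro i
      induction i with
      | zero => exact ha₀
      | succ i ih => rw [hssucc]; exact (hgf (s i) ih).1
    have hsd : ∀ i, ‖s i - (s (i + 1) + h)‖ = d := by
      intro i
      rw [hssucc]
      exact (hgf (s i) (hsA i)).2
    have hsum : ∀ N : ℕ, ‖s 0 - s N - (N : ℝ) • h‖ ≤ N * d := by
      intro N
      have heq : s 0 - s N - (N : ℝ) • h = ∑ i ∈ Finset.range N, (s i - s (i + 1) - h) := by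
        rw [Finset.sum_sub_distrib, Finset.sum_range_sub' s N, Finset.sum_const,
          Finset.card_range, Nat.cast_smul_eq_nsmul]
      rw [heq]
      calc ‖∑ i ∈ Finset.range N, (s i - s (i + 1) - h)‖
          ≤ ∑ i ∈ Finset.range N, ‖s i - s (i + 1) - h‖ := norm_sum_le _ _
        _ = ∑ _i ∈ Finset.range N, d := by
            refine Finset.sum_congr rfl fun i _ => ?_
            rw [sub_sub]
            exact hsd i
        _ = N * d := by simp [mul_comm]
    refine le_of_forall_pos_le_add fun ε hε => ?_
    obtain ⟨N, hN⟩ := exists_nat_gt (2 * CA / ε)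
    have hN0 : (0 : ℝ) < N := lt_of_le_of_lt (div_nonneg (by linarith) hε.le) hN
    have h2CA : 2 * CA < N * ε := by
      rw [div_lt_iff₀ hε] at hN
      linarith
    have hNd : (N : ℝ) * ‖h‖ ≤ N * d + 2 * CA := by
      have h1 : ‖(N : ℝ) • h‖ ≤ ‖s 0 - s N - (N : ℝ) • h‖ + ‖s 0 - s N‖ := by
        have ht := norm_sub_le (s 0 - s N) (s 0 - s N - (N : ℝ) • h)
        have he : s 0 - s N - (s 0 - s N - (N : ℝ) • h) = (N : ℝ) • h := by abel
        rw [he] at ht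
        linarith
      have h2 : ‖s 0 - s N‖ ≤ 2 * CA := by
        calc ‖s 0 - s N‖ ≤ ‖s 0‖ + ‖s N‖ := norm_sub_le _ _
          _ ≤ CA + CA := add_le_add (hCA _ (hsA 0)) (hCA _ (hsA N))
          _ = 2 * CA := by ring
      have h3 : ‖(N : ℝ) • h‖ = (N : ℝ) * ‖h‖ := by
        rw [norm_smul, Real.norm_natCast]
      linarith [hsum N]
    have : (N : ℝ) * ‖h‖ < N * (d + ε) := by
      rw [mul_add]
      linarith
    exact le_of_lt ((mul_lt_mul_iff_right₀ hN0).mp this)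
  have hdh : ‖h‖ = d := le_antisymm hle_d hd_le
  -- parity of iterates
  have key : ∀ m : ℕ, (∀ p ∈ A, (Even m → T^[m] p ∈ A) ∧ (¬Even m → T^[m] p ∈ B)) ∧
      (∀ q ∈ B, (Even m → T^[m] q ∈ B) ∧ (¬Even m → T^[m] q ∈ A)) := by
    intro m
    induction m with
    | zero =>
        exact ⟨fun p hp => ⟨fun _ => hp, fun he => absurd Even.zero he⟩,
          fun q hq => ⟨fun _ => hq, fun he => absurd Even.zero he⟩⟩
    | succ m ih =>
        have hpar : Even (m + 1) ↔ ¬Even m := Nat.even_add_one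
        refine ⟨fun p hp => ⟨fun he => ?_, fun he => ?_⟩,
          fun q hq => ⟨fun he => ?_, fun he => ?_⟩⟩ <;> rw [Function.iterate_succ_apply']
        · exact hTB ((ih.1 p hp).2 (hpar.mp he))
        · exact hTA ((ih.1 p hp).1 (not_not.mp fun hm => he (hpar.mpr hm)))
        · exact hTA ((ih.2 q hq).2 (hpar.mp he))
        · exact hTB ((ih.2 q hq).1 (not_not.mp fun hm => he (hpar.mpr hm)))
  -- the two alternating sequences
  set w : ℕ → X := fun m => if Odd m then T^[m] x else T^[m] (x + h) with hw
  have hαval : ∀ m : ℕ, uSeq T x (x + h) m = if Odd m then T^[m] (x + h) else T^[m] x := by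
    intro m; rfl
  have hαA : ∀ m, uSeq T x (x + h) m ∈ A := by
    intro m
    rw [hαval]
    by_cases hm : Odd m
    · simp only [hm, if_true]
      exact (key m).2 (x + h) hxB |>.2 (Nat.not_even_iff_odd.mpr hm)
    · simp only [hm, if_false]
      exact (key m).1 x hx |>.1 (Nat.not_odd_iff_even.mp hm)
  have hwB : ∀ m, w m ∈ B := by
    intro m
    rw [hw]
    by_cases hm : Odd m
    · simp only [hm, if_true]
      exact (key m).1 x hx |>.2 (Nat.not_even_iff_odd.mpr hm)
    · simp only [hm, if_false]
      exact (key m).2 (x + h) hxB |>.1 (Nat.not_odd_iff_even.mp hm)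
  have hwA : ∀ m, w m - h ∈ A := fun m => hsubA (w m) (hwB m)
  -- the distance between the sequences tends to d
  have hdist_eq : ∀ m, ‖uSeq T x (x + h) m - w m‖ = ‖T^[m] x - T^[m] (x + h)‖ := by
    intro m
    rw [hαval, hw]
    by_cases hm : Odd m <;> simp [hm, norm_sub_rev]
  have htend : Tendsto (fun m => ‖uSeq T x (x + h) m - w m‖) atTop (nhds d) := by
    have hup : ∀ m, ‖uSeq T x (x + h) m - w m‖ ≤ k m * d := by
      intro m
      rw [hdist_eq]
      have := hasym m x hx (x + h) hxB
      have hxx : ‖x - (x + h)‖ = d := by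
        rw [← hdh]; simp
      rwa [hxx] at this
    have hlo : ∀ m, d ≤ ‖uSeq T x (x + h) m - w m‖ :=
      fun m => d_le _ (hαA m) _ (hwB m)
    have hkd : Tendsto (fun m => k m * d) atTop (nhds d) := by
      have := hklim.mul_const d
      rwa [one_mul] at this
    exact tendsto_of_tendsto_of_tendsto_of_le_of_le tendsto_const_nhds hkd hlo hup
  have htend2 : Tendsto (fun m => ‖(w m - h) - w m‖) atTop (nhds d) := by
    have : (fun m => ‖(w m - h) - w m‖) = fun _ => d := by
      funext m
      rw [← hdh]
      simp
    rw [this]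
    exact tendsto_const_nhds
  -- property UC gives the asymptotic identification
  have hε : Tendsto (fun m => ‖uSeq T x (x + h) m - (w m - h)‖) atTop (nhds 0) :=
    hUC (fun m => uSeq T x (x + h) m) (fun m => w m - h) w hαA hwA hwB htend htend2
  -- the key pointwise inequality
  have hunB : uSeq T (a + h) a n ∈ B := by
    show (if Odd n then T^[n] a else T^[n] (a + h)) ∈ B
    by_cases hn : Odd n
    · simp only [hn, if_true]
      exact (key n).1 a ha |>.2 (Nat.not_even_iff_odd.mpr hn)
    · simp only [hn, if_false]
      exact (key n).2 (a + h) hbB |>.1 (Nat.not_odd_iff_even.mp hn)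
  have hkn0 : (0 : ℝ) ≤ k n := le_trans zero_le_one (hk1 n)
  have key2 : ∀ m, ‖uSeq T x (x + h) (m + n) - uSeq T (a + h) a n‖ ≤
      k n * ‖uSeq T x (x + h) m - (a + h)‖ + k n * ‖uSeq T x (x + h) m - (w m - h)‖ := by
    intro m
    by_cases hn : Odd n
    · -- n odd : compare through w m and the rectangle property
      have hun : uSeq T (a + h) a n = T^[n] a := if_pos hn
      have hα : uSeq T x (x + h) (m + n) = T^[n] (w m) := by
        rw [hαval, hw]
        by_cases hm : Odd m
        · have hmn : ¬Odd (m + n) := by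
            simp [Nat.odd_add, hm, Nat.not_even_iff_odd.mpr hn]
          simp only [hmn, if_false, hm, if_true]
          rw [add_comm m n, Function.iterate_add_apply]
        · have hmn : Odd (m + n) :=
            Nat.odd_add.mpr (iff_of_false hm (Nat.not_even_iff_odd.mpr hn))
          simp only [hmn, if_true, hm, if_false]
          rw [add_comm m n, Function.iterate_add_apply]
      rw [hα, hun]
      have hb1 : ‖T^[n] (w m) - T^[n] a‖ ≤ k n * ‖a - w m‖ := by
        rw [norm_sub_rev]
        exact hasym n a ha (w m) (hwB m)
      have hrect' : ‖a - w m‖ = ‖(a + h) - (w m - h)‖ := by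
        have hr := hrect (w m - h) (hwA m) a ha
        rw [sub_add_cancel] at hr
        rw [norm_sub_rev, hr]
      have htri : ‖(a + h) - (w m - h)‖ ≤ ‖uSeq T x (x + h) m - (a + h)‖ +
          ‖uSeq T x (x + h) m - (w m - h)‖ := by
        calc ‖(a + h) - (w m - h)‖
            ≤ ‖(a + h) - uSeq T x (x + h) m‖ + ‖uSeq T x (x + h) m - (w m - h)‖ :=
              norm_sub_le_norm_sub_add_norm_sub _ _ _
          _ = ‖uSeq T x (x + h) m - (a + h)‖ + ‖uSeq T x (x + h) m - (w m - h)‖ := by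
              rw [norm_sub_rev (a + h)]
      calc ‖T^[n] (w m) - T^[n] a‖ ≤ k n * ‖a - w m‖ := hb1
        _ = k n * ‖(a + h) - (w m - h)‖ := by rw [hrect']
        _ ≤ k n * (‖uSeq T x (x + h) m - (a + h)‖ + ‖uSeq T x (x + h) m - (w m - h)‖) :=
            mul_le_mul_of_nonneg_left htri hkn0
        _ = _ := by ring
    · -- n even : direct
      have hun : uSeq T (a + h) a n = T^[n] (a + h) := if_neg hn
      have hα : uSeq T x (x + h) (m + n) = T^[n] (uSeq T x (x + h) m) := by
        rw [hαval, hαval]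
        by_cases hm : Odd m
        · have hmn : Odd (m + n) :=
            Nat.odd_add.mpr (iff_of_true hm (Nat.not_odd_iff_even.mp hn))
          simp only [hmn, if_true, hm, if_true]
          rw [add_comm m n, Function.iterate_add_apply]
        · have hmn : ¬Odd (m + n) := by
            simp [Nat.odd_add, hm, Nat.not_odd_iff_even.mp hn]
          simp only [hmn, if_false, hm, if_false]
          rw [add_comm m n, Function.iterate_add_apply]
      rw [hα, hun]
      have hb1 : ‖T^[n] (uSeq T x (x + h) m) - T^[n] (a + h)‖ ≤
          k n * ‖uSeq T x (x + h) m - (a + h)‖ :=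
        hasym n _ (hαA m) (a + h) hbB
      have hpos : 0 ≤ k n * ‖uSeq T x (x + h) m - (w m - h)‖ :=
        mul_nonneg hkn0 (norm_nonneg _)
      linarith
  -- boundedness facts for limsup manipulation
  have hGbd : ∀ m, ‖uSeq T x (x + h) m - uSeq T (a + h) a n‖ ≤ CA + CB := by
    intro m
    calc ‖uSeq T x (x + h) m - uSeq T (a + h) a n‖
        ≤ ‖uSeq T x (x + h) m‖ + ‖uSeq T (a + h) a n‖ := norm_sub_le _ _
      _ ≤ CA + CB := add_le_add (hCA _ (hαA m)) (hCB _ hunB)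
  have hFbd : ∀ m, ‖uSeq T x (x + h) m - (a + h)‖ ≤ CA + CB := by
    intro m
    calc ‖uSeq T x (x + h) m - (a + h)‖ ≤ ‖uSeq T x (x + h) m‖ + ‖a + h‖ := norm_sub_le _ _
      _ ≤ CA + CB := add_le_add (hCA _ (hαA m)) (hCB _ hbB)
  have hEbd : ∀ m, ‖uSeq T x (x + h) m - (w m - h)‖ ≤ CA + CA := by
    intro m
    calc ‖uSeq T x (x + h) m - (w m - h)‖ ≤ ‖uSeq T x (x + h) m‖ + ‖w m - h‖ := norm_sub_le _ _
      _ ≤ CA + CA := add_le_add (hCA _ (hαA m)) (hCA _ (hwA m))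
  -- limsup computation
  set F : ℕ → ℝ := fun m => ‖uSeq T x (x + h) m - (a + h)‖ with hF
  set G : ℕ → ℝ := fun m => ‖uSeq T x (x + h) m - uSeq T (a + h) a n‖ with hG
  set E : ℕ → ℝ := fun m => ‖uSeq T x (x + h) m - (w m - h)‖ with hE
  have hF0 : ∀ m, (0 : ℝ) ≤ F m := fun m => norm_nonneg _
  have hE0 : ∀ m, (0 : ℝ) ≤ E m := fun m => norm_nonneg _
  have hbddF : IsBoundedUnder (· ≤ ·) atTop fun m => k n * F m :=
    isBoundedUnder_of_eventually_le (a := k n * (CA + CB))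
      (Eventually.of_forall fun m => mul_le_mul_of_nonneg_left (hFbd m) hkn0)
  have hbddE : IsBoundedUnder (· ≤ ·) atTop fun m => k n * E m :=
    isBoundedUnder_of_eventually_le (a := k n * (CA + CA))
      (Eventually.of_forall fun m => mul_le_mul_of_nonneg_left (hEbd m) hkn0)
  have hgeF : IsBoundedUnder (· ≥ ·) atTop fun m => k n * F m :=
    isBoundedUnder_of_eventually_ge (a := 0)
      (Eventually.of_forall fun m => mul_nonneg hkn0 (hF0 m))
  have hgeE : IsBoundedUnder (· ≥ ·) atTop fun m => k n * E m :=
    isBoundedUnder_of_eventually_ge (a := 0)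
      (Eventually.of_forall fun m => mul_nonneg hkn0 (hE0 m))
  have hElim : Filter.limsup (fun m => k n * E m) atTop = 0 := by
    have : Tendsto (fun m => k n * E m) atTop (nhds 0) := by
      have := hε.const_mul (k n)
      simpa using this
    exact this.limsup_eq
  have step1 : Filter.limsup G atTop = Filter.limsup (fun m => G (m + n)) atTop :=
    (limsup_nat_add G n).symm
  have step2 : Filter.limsup (fun m => G (m + n)) atTop ≤
      Filter.limsup ((fun m => k n * F m) + fun m => k n * E m) atTop := by
    refine limsup_le_limsup (Eventually.of_forall fun m => ?_) ?_ ?_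
    · exact key2 m
    · exact (isBoundedUnder_of_eventually_ge (a := 0)
        (Eventually.of_forall fun m => norm_nonneg _)).isCoboundedUnder_le
    · exact isBoundedUnder_of_eventually_le (a := k n * (CA + CB) + k n * (CA + CA))
        (Eventually.of_forall fun m => add_le_add
          (mul_le_mul_of_nonneg_left (hFbd m) hkn0)
          (mul_le_mul_of_nonneg_left (hEbd m) hkn0))
  have step3 : Filter.limsup ((fun m => k n * F m) + fun m => k n * E m) atTop ≤
      Filter.limsup (fun m => k n * F m) atTop + Filter.limsup (fun m => k n * E m) atTop :=
    limsup_add_le hgeF hbddF hgeE.isCoboundedUnder_le hbddE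
  have step4 : Filter.limsup (fun m => k n * F m) atTop ≤ k n * Filter.limsup F atTop := by
    have := limsup_mul_le (f := atTop) (u := fun _ : ℕ => k n) (v := F)
      (Frequently.of_forall fun _ => hkn0)
      (isBoundedUnder_of_eventually_le (a := k n) (Eventually.of_forall fun _ => le_rfl))
      (Eventually.of_forall hF0)
      (isBoundedUnder_of_eventually_le (a := CA + CB) (Eventually.of_forall hFbd))
    rwa [limsup_const (k n)] at this
  calc Filter.limsup G atTop = Filter.limsup (fun m => G (m + n)) atTop := step1
    _ ≤ Filter.limsup ((fun m => k n * F m) + fun m => k n * E m) atTop := step2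
    _ ≤ Filter.limsup (fun m => k n * F m) atTop + Filter.limsup (fun m => k n * E m) atTop :=
        step3
    _ = Filter.limsup (fun m => k n * F m) atTop := by rw [hElim, add_zero]
    _ ≤ k n * Filter.limsup F atTop := step4
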